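/- Let O be a commutative, reduced, finite, flat Z-algebra with normalization O~, and let p be a prime. Write the Z-exponent of O~/O as c·p^d with gcd(c,p)=1, let p·O~ = p~_1^{e_1} ⋯ p~_g^{e_g} be the prime factorization, and set p_{i,n} = (p~_i^{e_i n}) ∩ O. Then c^{g-1} p^{d(g-1)} O ⊆ p_{i,n} + ∏_{j≠i} p_{j,n} for every i and every n ≥ 1. -/

import Mathlib

open Finset in
lemma aux_prod_mem {R ι : Type*} [CommRing R] (I : Ideal R) (s : Finset ι)
    (K : ι → Ideal R) (α β : ι → R) (hα : ∀ j ∈ s, α j ∈ I) (hβ : ∀ j ∈ s, β j ∈ K j) :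
    ∏ j ∈ s, (α j + β j) ∈ I + ∏ j ∈ s, K j := by
  classical
  induction s using Finset.induction_on with
  | empty => simp [Submodule.add_eq_sup, Ideal.one_eq_top]
  | insert a s ha ih =>
    rw [Finset.prod_insert ha, Finset.prod_insert ha]
    obtain ⟨u, hu, v, hv, huv⟩ := Submodule.mem_sup.mp
      (by simpa [Submodule.add_eq_sup] using
        ih (fun j hj => hα j (mem_insert_of_mem hj)) (fun j hj => hβ j (mem_insert_of_mem hj)))
    rw [Submodule.add_eq_sup]
    apply Submodule.mem_sup.mpr
    refine ⟨α a * (∏ j ∈ s, (α j + β j)) + β a * u, ?_, β a * v, ?_, ?_⟩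
    · exact Ideal.add_mem _ (Ideal.mul_mem_right _ _ (hα a (mem_insert_self a s)))
        (Ideal.mul_mem_left _ _ hu)
    · exact Ideal.mul_mem_mul (hβ a (mem_insert_self a s)) hv
    · rw [← huv]; ring


/-- Let `O` be a commutative, reduced, finite, flat ℤ-algebra with
normalization `Õ = ∏ j, D j` (a finite product of Dedekind domains), and `p` a prime.
Write the ℤ-exponent of `Õ/O` as `c·p^d` with `gcd(c,p) = 1`, let
`p·Õ = P 1 ^ e 1 ⋯ P g ^ e g` be the prime factorization, and set
`p_{i,n} = (P i ^ (e i * n)) ∩ O`.  Then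
`c^(g-1) p^(d(g-1)) O ⊆ p_{i,n} + ∏_{j ≠ i} p_{j,n}` for every `i` and every `n ≥ 1`. -/
theorem stmt6
    (O : Type) [CommRing O] [IsReduced O] [Module.Finite ℤ O] [Module.Flat ℤ O]
    (h : ℕ) (D : Fin h → Type) [∀ j, CommRing (D j)] [∀ j, IsDomain (D j)]
    [∀ j, IsDedekindDomain (D j)]
    [Algebra O (∀ j, D j)]
    (hinj : Function.Injective (algebraMap O (∀ j, D j)))
    [Algebra.IsIntegral O (∀ j, D j)]
    (p c d : ℕ) (hp : p.Prime) (hc : Nat.Coprime c p) (hc0 : 0 < c)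
    (hexp : ∀ y : ∀ j, D j, (c * p ^ d : ℕ) • y ∈ (algebraMap O (∀ j, D j)).range)
    (g : ℕ) (P : Fin g → Ideal (∀ j, D j)) (e : Fin g → ℕ)
    (hP : ∀ i, (P i).IsMaximal) (hPne : ∀ i j : Fin g, i ≠ j → P i ≠ P j)
    (he : ∀ i, 0 < e i)
    (hfact : Ideal.span {((p : ℕ) : ∀ j, D j)} = ∏ i, P i ^ (e i))
    (i : Fin g) (n : ℕ) (hn : 1 ≤ n) :
    Ideal.span {(c : O) ^ (g - 1) * (p : O) ^ (d * (g - 1))} ≤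
      (P i ^ (e i * n)).comap (algebraMap O (∀ j, D j)) +
      ∏ j ∈ Finset.univ.erase i, (P j ^ (e j * n)).comap (algebraMap O (∀ j, D j)) := by
  classical
  set f := algebraMap O (∀ j, D j) with hf
  have hcop : ∀ j ∈ Finset.univ.erase i, IsCoprime (P i ^ (e i * n)) (P j ^ (e j * n)) := by
    intro j hj
    have hne : P i ≠ P j := hPne i j (Finset.ne_of_mem_erase hj).symm
    exact (Ideal.isCoprime_iff_sup_eq.mpr ((hP i).coprime_of_ne (hP j) hne)).pow
  have hab : ∀ j ∈ Finset.univ.erase i,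
      ∃ a ∈ P i ^ (e i * n), ∃ b ∈ P j ^ (e j * n), a + b = 1 := fun j hj =>
    Ideal.isCoprime_iff_exists.mp (hcop j hj)
  choose! a ha b hb habs using hab
  have hAB : ∀ j : Fin g, ∃ A : O, f A = (c * p ^ d : ℕ) • a j :=
    fun j => RingHom.mem_range.mp (hexp (a j))
  have hBB : ∀ j : Fin g, ∃ B : O, f B = (c * p ^ d : ℕ) • b j :=
    fun j => RingHom.mem_range.mp (hexp (b j))
  choose A hA using hAB
  choose B hB using hBB
  have hsum : ∀ j ∈ Finset.univ.erase i, A j + B j = ((c * p ^ d : ℕ) : O) := by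
    intro j hj
    apply hinj
    rw [map_add, hA, hB, ← smul_add, habs j hj, map_natCast]
    simp [nsmul_eq_mul]
  have hAmem : ∀ j ∈ Finset.univ.erase i,
      A j ∈ (P i ^ (e i * n)).comap f := by
    intro j hj
    simp only [Ideal.mem_comap, hA, nsmul_eq_mul]
    exact Ideal.mul_mem_left _ _ (ha j hj)
  have hBmem : ∀ j ∈ Finset.univ.erase i,
      B j ∈ (P j ^ (e j * n)).comap f := by
    intro j hj
    simp only [Ideal.mem_comap, hB, nsmul_eq_mul]
    exact Ideal.mul_mem_left _ _ (hb j hj)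
  rw [Ideal.span_le]
  rintro x rfl
  have key : (c : O) ^ (g - 1) * (p : O) ^ (d * (g - 1)) =
      ∏ j ∈ Finset.univ.erase i, (A j + B j) := by
    rw [Finset.prod_congr rfl hsum, Finset.prod_const, Finset.card_erase_of_mem
      (Finset.mem_univ i), Finset.card_univ, Fintype.card_fin]
    push_cast
    rw [mul_pow, ← pow_mul]
  rw [SetLike.mem_coe, key]
  exact aux_prod_mem _ _ _ _ _ hAmem hBmem
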